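/- Let m = p^n be a prime power with m odd or m ≡ 0 (mod 4), and let χ be a nontrivial character of G = (ℤ/mℤ)^*/{±1}, taken as a primitive Dirichlet character of conductor f_χ = p^s. Then Σ_{k∈G_χ} χ(k)·log|1 + ζ_{f_χ}^k| = ε·Σ_{k∈G} χ(k)·log|1 + ζ_m^k|, where ε = -1 if p = 2 and s < n, and ε = 1 otherwise; here the sums are over sets of representatives of G_χ = (ℤ/f_χℤ)^*/{±1} and of G, respectively. -/

import Mathlib

open Complex

noncomputable section

/-- `ζ_m = e^{2πi/m}`. -/
def zetaC (m : ℕ) : ℂ := Complex.exp (2 * Real.pi * I / m)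

lemma zetaC_ne_zero (m : ℕ) : zetaC m ≠ 0 := Complex.exp_ne_zero _

lemma isPrimitiveRoot_zetaC {m : ℕ} (hm : m ≠ 0) : IsPrimitiveRoot (zetaC m) m :=
  Complex.isPrimitiveRoot_exp m hm

lemma zetaC_pow_eq {a b : ℕ} (ha : a ≠ 0) (hb : b ≠ 0) : zetaC (a * b) ^ a = zetaC b := by
  unfold zetaC
  rw [← Complex.exp_nat_mul]
  congr 1
  have ha' : (a : ℂ) ≠ 0 := Nat.cast_ne_zero.mpr ha
  have hb' : (b : ℂ) ≠ 0 := Nat.cast_ne_zero.mpr hb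
  push_cast
  field_simp

open Polynomial Finset in
lemma prod_y_sub_pow {d : ℕ} (hd : 0 < d) {ζ : ℂ} (hζ : IsPrimitiveRoot ζ d) (y : ℂ) :
    ∏ t ∈ Finset.range d, (y - ζ ^ t) = y ^ d - 1 := by
  have h := congrArg (Polynomial.eval y) (X_pow_sub_one_eq_prod hd hζ)
  simp only [eval_sub, eval_pow, eval_X, eval_one, eval_prod, eval_sub, eval_C] at h
  rw [h]
  have hval : (Polynomial.nthRootsFinset d (1 : ℂ)).val = Polynomial.nthRoots d (1 : ℂ) := by
    rw [Polynomial.nthRootsFinset, Multiset.toFinset_val,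
      Multiset.dedup_eq_self.mpr (IsPrimitiveRoot.nthRoots_one_nodup hζ)]
  rw [show (∏ x ∈ nthRootsFinset d (1 : ℂ), (y - x)) =
    ((nthRootsFinset d (1 : ℂ)).val.map (fun x => y - x)).prod from rfl, hval,
    hζ.nthRoots_eq (one_pow d), Multiset.map_map]
  rw [show (∏ t ∈ Finset.range d, (y - ζ ^ t)) =
    ((Finset.range d).val.map (fun t => y - ζ ^ t)).prod from rfl, Finset.range_val]
  simp [Function.comp]

lemma prod_one_add_mul {d : ℕ} (hd : 0 < d) {ζ : ℂ} (hζ : IsPrimitiveRoot ζ d)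
    {w : ℂ} (hw : w ≠ 0) :
    ∏ t ∈ Finset.range d, (1 + w * ζ ^ t) = 1 - (-1) ^ d * w ^ d := by
  have key : ∀ t : ℕ, 1 + w * ζ ^ t = (-w) * ((-w⁻¹) - ζ ^ t) := by
    intro t; field_simp; ring
  calc ∏ t ∈ Finset.range d, (1 + w * ζ ^ t)
      = ∏ t ∈ Finset.range d, ((-w) * ((-w⁻¹) - ζ ^ t)) := by simp_rw [key]
    _ = (-w) ^ d * ((-w⁻¹) ^ d - 1) := by
        rw [Finset.prod_mul_distrib, Finset.prod_const, Finset.card_range,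
          prod_y_sub_pow hd hζ]
    _ = 1 - (-1) ^ d * w ^ d := by
        rw [neg_pow (w⁻¹), neg_pow w, inv_pow]
        field_simp
        ring_nf
        have h2 : ((-1 : ℂ) ^ d) ^ 2 = 1 := by
          rw [← pow_mul, mul_comm, pow_mul]; norm_num
        simp [pow_mul, h2]
        ring

lemma sum_regroup (f d : ℕ) (hf : 0 < f) (F : ℕ → ℂ) :
    ∑ k ∈ Finset.range (f * d), F k
      = ∑ a ∈ Finset.range f, ∑ t ∈ Finset.range d, F (a + f * t) := by
  rw [← Finset.sum_product']
  refine Finset.sum_nbij' (fun k => (k % f, k / f)) (fun p => p.1 + f * p.2) ?_ ?_ ?_ ?_ ?_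
  · intro k hk
    rw [Finset.mem_range] at hk
    refine Finset.mem_product.mpr ⟨Finset.mem_range.mpr (Nat.mod_lt _ hf),
      Finset.mem_range.mpr ?_⟩
    rw [Nat.div_lt_iff_lt_mul hf]
    calc k < f * d := hk
      _ ≤ d * f := by rw [Nat.mul_comm]
  · intro p hp
    rw [Finset.mem_product, Finset.mem_range, Finset.mem_range] at hp
    rw [Finset.mem_range]
    have h1 : p.1 + f * p.2 < f * (p.2 + 1) := by rw [Nat.mul_succ]; omega
    exact lt_of_lt_of_le h1 (Nat.mul_le_mul_left f hp.2)
  · intro k _; exact Nat.mod_add_div k f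
  · intro p hp
    rw [Finset.mem_product, Finset.mem_range, Finset.mem_range] at hp
    have h1 : (p.1 + f * p.2) % f = p.1 := by
      rw [Nat.add_mul_mod_self_left, Nat.mod_eq_of_lt hp.1]
    have h2 : (p.1 + f * p.2) / f = p.2 := by
      rw [Nat.add_mul_div_left _ _ hf, Nat.div_eq_of_lt hp.1, Nat.zero_add]
    exact Prod.ext h1 h2
  · intro k _; rw [Nat.mod_add_div k f]

lemma one_sub_zeta_ne {f k : ℕ} (hf : f ≠ 0) (h : ¬ f ∣ k) : 1 - zetaC f ^ k ≠ 0 := by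
  intro hc
  exact h ((isPrimitiveRoot_zetaC hf).dvd_of_pow_eq_one k (by linear_combination -hc))

lemma one_add_zeta_ne {f k : ℕ} (hf : f ≠ 0) (h2 : ¬ f ∣ 2 * k) : 1 + zetaC f ^ k ≠ 0 := by
  intro hc
  have hk : zetaC f ^ k = -1 := by linear_combination hc
  apply h2
  apply (isPrimitiveRoot_zetaC hf).dvd_of_pow_eq_one
  rw [mul_comm, pow_mul, hk]
  norm_num

lemma log_inner_sum {m f d : ℕ} (hm : m = f * d) (hf0 : 0 < f) (hd0 : 0 < d) (a : ℕ)
    (hz : ∀ t, t < d → (1 + zetaC m ^ (a + f * t)) ≠ 0) :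
    ∑ t ∈ Finset.range d, Real.log (‖1 + zetaC m ^ (a + f * t)‖)
      = Real.log (‖1 - (-1) ^ d * zetaC f ^ a‖) := by
  subst hm
  have hm0 : f * d ≠ 0 := Nat.mul_ne_zero hf0.ne' hd0.ne'
  have hζd : zetaC (f * d) ^ f = zetaC d := zetaC_pow_eq hf0.ne' hd0.ne'
  have hprim_d : IsPrimitiveRoot (zetaC (f * d) ^ f) d :=
    hζd ▸ isPrimitiveRoot_zetaC hd0.ne'
  have hw : zetaC (f * d) ^ a ≠ 0 := pow_ne_zero _ (zetaC_ne_zero _)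
  have hwd : (zetaC (f * d) ^ a) ^ d = zetaC f ^ a := by
    rw [← pow_mul, mul_comm a d, pow_mul, show f * d = d * f from Nat.mul_comm f d,
      zetaC_pow_eq hd0.ne' hf0.ne']
  have hprod : ∏ t ∈ Finset.range d, (1 + zetaC (f * d) ^ (a + f * t))
      = 1 - (-1) ^ d * zetaC f ^ a := by
    have key : ∀ t, zetaC (f * d) ^ (a + f * t)
        = zetaC (f * d) ^ a * (zetaC (f * d) ^ f) ^ t := by
      intro t; rw [pow_add, pow_mul]
    simp_rw [key]
    rw [prod_one_add_mul hd0 hprim_d hw, hwd]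
  rw [← Real.log_prod (f := fun t => ‖1 + zetaC (f * d) ^ (a + f * t)‖) (fun t ht => norm_ne_zero_iff.mpr (hz t (Finset.mem_range.mp ht))),
    ← norm_prod, hprod]

open DirichletCharacter in
lemma level_sum_eq {p n s f m : ℕ} (hp : p.Prime) (hm : m = p ^ n) (hf : f = p ^ s)
    (hs : 1 ≤ s) (hsn : s ≤ n) (hn2 : p = 2 → 2 ≤ n) (hdvd : f ∣ m)
    (χ₁ : DirichletCharacter ℂ f) :
    ∑ k ∈ Finset.range m, (DirichletCharacter.changeLevel hdvd χ₁) ((k : ℕ) : ZMod m) *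
        (Real.log (‖1 + zetaC m ^ k‖) : ℂ)
      = ∑ a ∈ Finset.range f, χ₁ ((a : ℕ) : ZMod f) *
        (Real.log (‖1 - (-1) ^ (p ^ (n - s)) * zetaC f ^ a‖) : ℂ) := by
  subst hm; subst hf
  have hp1 : 1 < p := hp.one_lt
  set d := p ^ (n - s) with hd
  have hf0 : 0 < p ^ s := Nat.pow_pos (n := s) (by omega)
  have hd0 : 0 < d := Nat.pow_pos (n := _) (by omega)
  have hmfd : p ^ n = p ^ s * d := by rw [hd, ← pow_add]; congr 1; omega
  haveI hne_m : NeZero (p ^ n) := ⟨(Nat.pow_pos (n := n) (by omega)).ne'⟩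
  haveI hne_f : NeZero (p ^ s) := ⟨hf0.ne'⟩
  have hval : ∀ k : ℕ, (changeLevel hdvd χ₁) ((k : ℕ) : ZMod (p ^ n))
      = χ₁ ((k : ℕ) : ZMod (p ^ s)) := by
    intro k
    by_cases hu : IsUnit ((k : ℕ) : ZMod (p ^ n))
    · have h1 : (hu.unit : ZMod (p ^ n)) = ((k : ℕ) : ZMod (p ^ n)) := hu.unit_spec
      calc (changeLevel hdvd χ₁) ((k : ℕ) : ZMod (p ^ n))
          = (changeLevel hdvd χ₁) (hu.unit : ZMod (p ^ n)) := by rw [h1]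
        _ = χ₁ (ZMod.cast ((hu.unit : ZMod (p ^ n)))) :=
            changeLevel_eq_cast_of_dvd χ₁ hdvd hu.unit
        _ = χ₁ ((k : ℕ) : ZMod (p ^ s)) := by rw [h1, ZMod.cast_natCast hdvd]
    · rw [MulChar.map_nonunit _ hu, MulChar.map_nonunit]
      intro hu2
      apply hu
      rw [ZMod.isUnit_iff_coprime] at hu2 ⊢
      rw [Nat.coprime_pow_right_iff (by omega)] at hu2
      exact Nat.Coprime.pow_right n hu2
  calc ∑ k ∈ Finset.range (p ^ n), (changeLevel hdvd χ₁) ((k : ℕ) : ZMod (p ^ n)) *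
        (Real.log (‖1 + zetaC (p ^ n) ^ k‖) : ℂ)
      = ∑ k ∈ Finset.range (p ^ s * d), χ₁ ((k : ℕ) : ZMod (p ^ s)) *
        (Real.log (‖1 + zetaC (p ^ n) ^ k‖) : ℂ) := by
        rw [← hmfd]; exact Finset.sum_congr rfl fun k _ => by rw [hval k]
    _ = ∑ a ∈ Finset.range (p ^ s), ∑ t ∈ Finset.range d,
          χ₁ (((a + p ^ s * t : ℕ)) : ZMod (p ^ s)) *
          (Real.log (‖1 + zetaC (p ^ n) ^ (a + p ^ s * t)‖) : ℂ) :=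
        sum_regroup _ _ hf0 _
    _ = ∑ a ∈ Finset.range (p ^ s), χ₁ ((a : ℕ) : ZMod (p ^ s)) *
        (Real.log (‖1 - (-1) ^ d * zetaC (p ^ s) ^ a‖) : ℂ) := by
        refine Finset.sum_congr rfl fun a _ => ?_
        have hcast : ∀ t : ℕ, (((a + p ^ s * t : ℕ)) : ZMod (p ^ s))
            = ((a : ℕ) : ZMod (p ^ s)) := by
          intro t
          rw [Nat.cast_add, Nat.cast_mul, ZMod.natCast_self, zero_mul, add_zero]
        simp_rw [hcast]
        rw [← Finset.mul_sum]
        by_cases hu : IsUnit ((a : ℕ) : ZMod (p ^ s))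
        · congr 1
          have hcop : Nat.Coprime a p := by
            rw [ZMod.isUnit_iff_coprime, Nat.coprime_pow_right_iff (by omega)] at hu
            exact hu
          have hz : ∀ t, t < d → (1 + zetaC (p ^ n) ^ (a + p ^ s * t)) ≠ 0 := by
            intro t _
            apply one_add_zeta_ne (NeZero.ne _)
            intro hdvd2
            rcases hp.eq_two_or_odd' with h2 | hodd
            · -- p = 2 : a odd, get contradiction
              subst h2
              have hn2' : 2 ≤ n := hn2 rfl
              obtain ⟨c, hc⟩ := hdvd2
              have hpow : 2 ^ n = 2 * 2 ^ (n - 1) := by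
                rw [← pow_succ']; congr 1; omega
              rw [hpow, mul_assoc] at hc
              have hk2 : a + 2 ^ s * t = 2 ^ (n - 1) * c := by omega
              have h2k : 2 ∣ a + 2 ^ s * t := by
                rw [hk2]
                exact Dvd.dvd.mul_right (dvd_pow_self 2 (by omega)) c
              have h2f : 2 ∣ 2 ^ s * t := Dvd.dvd.mul_right (dvd_pow_self 2 (by omega)) t
              have h2a : 2 ∣ a := (Nat.dvd_add_right h2f).mp (by rwa [Nat.add_comm] at h2k)
              have hg : (2 : ℕ) ∣ Nat.gcd a 2 := Nat.dvd_gcd h2a dvd_rfl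
              rw [Nat.Coprime] at hcop
              rw [hcop] at hg
              exact absurd (Nat.dvd_one.mp hg) (by omega)
            · -- p odd : m odd
              have hmodd : Odd (p ^ n) := hodd.pow
              have hcop2 : Nat.Coprime (p ^ n) 2 := Nat.coprime_two_right.mpr hmodd
              have hmk : p ^ n ∣ a + p ^ s * t := (Nat.Coprime.dvd_of_dvd_mul_left hcop2 hdvd2)
              have hpk : p ∣ a + p ^ s * t := dvd_trans (dvd_pow_self p (by omega)) hmk
              have hpf : p ∣ p ^ s * t := Dvd.dvd.mul_right (dvd_pow_self p (by omega)) t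
              have hpa : p ∣ a := (Nat.dvd_add_right hpf).mp (by rwa [Nat.add_comm] at hpk)
              have hg : p ∣ Nat.gcd a p := Nat.dvd_gcd hpa dvd_rfl
              rw [Nat.Coprime] at hcop
              rw [hcop] at hg
              exact absurd (Nat.dvd_one.mp hg) (by omega)
          have := log_inner_sum hmfd hf0 hd0 a hz
          rw [← this]; push_cast
          ring
        · rw [MulChar.map_nonunit _ hu, zero_mul, zero_mul]

open DirichletCharacter in
lemma eq_one_of_level_two (ψ : DirichletCharacter ℂ 2) : ψ = 1 :=
  MulChar.ext fun a => by rw [Subsingleton.elim a 1]; simp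

open DirichletCharacter in
lemma conductor_ne_two {n : ℕ} (hn : n ≠ 0) (χ : DirichletCharacter ℂ n) :
    χ.conductor ≠ 2 := by
  intro h
  have hft := factorsThrough_conductor χ
  rw [h] at hft
  obtain ⟨hdvd, χ₀, hχ₀⟩ := hft
  have hχ1 : χ = 1 := by rw [hχ₀, eq_one_of_level_two χ₀, map_one]
  have : χ.conductor = 1 := by haveI : NeZero n := ⟨hn⟩; exact eq_one_iff_conductor_eq_one.mp hχ1
  omega

lemma isUnit_natCast_two_pow {r k : ℕ} (hr : 0 < r) :
    IsUnit ((k : ℕ) : ZMod (2 ^ r)) ↔ Odd k := by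
  haveI : NeZero (2 ^ r) := ⟨(Nat.pow_pos (n := r) (by omega)).ne'⟩
  rw [ZMod.isUnit_iff_coprime, Nat.coprime_pow_right_iff hr, Nat.coprime_two_right]

lemma unit_mul_half {s : ℕ} {v : ZMod (2 ^ (s + 2))} (hv : IsUnit v) :
    v * ((2 ^ (s + 1) : ℕ) : ZMod (2 ^ (s + 2))) = ((2 ^ (s + 1) : ℕ) : ZMod (2 ^ (s + 2))) := by
  haveI : NeZero (2 ^ (s + 2)) := ⟨(Nat.pow_pos (n := _) (by omega)).ne'⟩
  have hx : ((v.val : ℕ) : ZMod (2 ^ (s + 2))) = v := by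
    rw [ZMod.natCast_val, ZMod.cast_id]
  have hodd : Odd v.val := by
    rw [← isUnit_natCast_two_pow (r := s + 2) (by omega), hx]; exact hv
  obtain ⟨e, he⟩ := hodd
  rw [← hx, ← Nat.cast_mul, ZMod.natCast_eq_natCast_iff]
  have harith : v.val * 2 ^ (s + 1) = e * 2 ^ (s + 2) + 2 ^ (s + 1) := by
    rw [he]; ring
  rw [harith]
  calc e * 2 ^ (s + 2) + 2 ^ (s + 1) ≡ 0 + 2 ^ (s + 1) [MOD 2 ^ (s + 2)] :=
        Nat.ModEq.add_right _ ((Nat.modEq_zero_iff_dvd).mpr ⟨e, by ring⟩)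
    _ = 2 ^ (s + 1) := by omega

lemma isUnit_one_add_half {s : ℕ} :
    IsUnit (((1 + 2 ^ (s + 1) : ℕ)) : ZMod (2 ^ (s + 2))) :=
  (isUnit_natCast_two_pow (by omega)).mpr ⟨2 ^ s, by ring⟩

open DirichletCharacter in
lemma chi_one_add_half {s : ℕ} (χ₁ : DirichletCharacter ℂ (2 ^ (s + 2)))
    (hprim : χ₁.conductor = 2 ^ (s + 2)) :
    χ₁ (((1 + 2 ^ (s + 1) : ℕ)) : ZMod (2 ^ (s + 2))) = -1 := by
  haveI : NeZero (2 ^ (s + 2)) := ⟨(Nat.pow_pos (n := _) (by omega)).ne'⟩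
  have hsq : χ₁ (((1 + 2 ^ (s + 1) : ℕ)) : ZMod (2 ^ (s + 2))) ^ 2 = 1 := by
    rw [← map_pow, ← Nat.cast_pow]
    have harith : (1 + 2 ^ (s + 1)) ^ 2 = 1 + (1 + 2 ^ s) * 2 ^ (s + 2) := by
      have h1 : 2 ^ (s + 1) = 2 * 2 ^ s := by rw [pow_succ']
      have h2 : 2 ^ (s + 2) = 4 * 2 ^ s := by rw [pow_add]; ring
      rw [h1, h2]; ring
    rw [harith, Nat.cast_add, Nat.cast_mul, ZMod.natCast_self, mul_zero, add_zero,
      Nat.cast_one, map_one]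
  rcases mul_eq_zero.mp (show (χ₁ (((1 + 2 ^ (s + 1) : ℕ)) : ZMod (2 ^ (s + 2))) - 1) *
      (χ₁ (((1 + 2 ^ (s + 1) : ℕ)) : ZMod (2 ^ (s + 2))) + 1) = 0 by
        linear_combination hsq) with h1 | h1
  · exfalso
    -- χ₁(1+g) = 1 leads to factoring through 2^(s+1), contradicting primitivity
    have hone : χ₁ (((1 + 2 ^ (s + 1) : ℕ)) : ZMod (2 ^ (s + 2))) = 1 := by
      linear_combination h1
    have hdvd : (2 ^ (s + 1) : ℕ) ∣ 2 ^ (s + 2) := pow_dvd_pow 2 (by omega)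
    have hg1 : 1 < 2 ^ (s + 1) := Nat.one_lt_two_pow (by omega)
    have hft : χ₁.FactorsThrough (2 ^ (s + 1)) := by
      rw [factorsThrough_iff_ker_unitsMap hdvd]
      intro u hu
      have hu1 : ((ZMod.unitsMap hdvd u : ZMod (2 ^ (s + 1)))) = 1 := by
        rw [hu]; rfl
      rw [ZMod.unitsMap_def] at hu1
      simp only [Units.coe_map, MonoidHom.coe_coe] at hu1
      rw [ZMod.castHom_apply, ZMod.cast_eq_val] at hu1
      have hmodeq : (u : ZMod (2 ^ (s + 2))).val ≡ 1 [MOD 2 ^ (s + 1)] := by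
        rwa [show (1 : ZMod (2 ^ (s + 1))) = ((1 : ℕ) : ZMod (2 ^ (s + 1))) by norm_num,
          ZMod.natCast_eq_natCast_iff] at hu1
      have hlt : (u : ZMod (2 ^ (s + 2))).val < 2 ^ (s + 2) := ZMod.val_lt _
      have hmod : (u : ZMod (2 ^ (s + 2))).val % 2 ^ (s + 1) = 1 := by
        have := hmodeq
        unfold Nat.ModEq at this
        rwa [Nat.mod_eq_of_lt hg1] at this
      have hdm := Nat.div_add_mod ((u : ZMod (2 ^ (s + 2))).val) (2 ^ (s + 1))
      have hqlt : (u : ZMod (2 ^ (s + 2))).val / 2 ^ (s + 1) < 2 := by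
        rw [Nat.div_lt_iff_lt_mul (by positivity), ← pow_succ']
        exact hlt
      have hcases : (u : ZMod (2 ^ (s + 2))).val = 1 ∨
          (u : ZMod (2 ^ (s + 2))).val = 1 + 2 ^ (s + 1) := by
        interval_cases h : ((u : ZMod (2 ^ (s + 2))).val / 2 ^ (s + 1)) <;> omega
      have hval' : ((((u : ZMod (2 ^ (s + 2))).val : ℕ)) : ZMod (2 ^ (s + 2)))
          = (u : ZMod (2 ^ (s + 2))) := by rw [ZMod.natCast_val, ZMod.cast_id]
      have : χ₁ ((u : ZMod (2 ^ (s + 2)))) = 1 := by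
        rw [← hval']
        rcases hcases with hc | hc
        · rw [hc, Nat.cast_one, map_one]
        · rw [hc]; exact hone
      have hcoe := MulChar.coe_toUnitHom χ₁ u
      exact Units.ext (by rw [hcoe, this]; rfl)
    have hle : χ₁.conductor ≤ 2 ^ (s + 1) :=
      Nat.sInf_le ((mem_conductorSet_iff _).mpr hft)
    rw [hprim] at hle
    have : (2 : ℕ) ^ (s + 1) < 2 ^ (s + 2) := Nat.pow_lt_pow_right (by omega) (by omega)
    omega
  · linear_combination h1

open DirichletCharacter in
lemma chi_add_half {s : ℕ} (χ₁ : DirichletCharacter ℂ (2 ^ (s + 2)))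
    (hprim : χ₁.conductor = 2 ^ (s + 2)) (x : ZMod (2 ^ (s + 2))) :
    χ₁ (x + ((2 ^ (s + 1) : ℕ) : ZMod (2 ^ (s + 2)))) = - χ₁ x := by
  have hcast1g : (((1 + 2 ^ (s + 1) : ℕ)) : ZMod (2 ^ (s + 2)))
      = 1 + ((2 ^ (s + 1) : ℕ) : ZMod (2 ^ (s + 2))) := by push_cast; ring
  have hshift : ∀ y : ZMod (2 ^ (s + 2)), IsUnit y →
      y + ((2 ^ (s + 1) : ℕ) : ZMod (2 ^ (s + 2))) = y * (1 + ((2 ^ (s + 1) : ℕ) : ZMod (2 ^ (s + 2)))) := by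
    intro y hy
    rw [mul_add, mul_one, unit_mul_half hy]
  by_cases hx : IsUnit x
  · rw [hshift x hx, map_mul, ← hcast1g, chi_one_add_half χ₁ hprim, mul_neg_one]
  · have hxg : ¬ IsUnit (x + ((2 ^ (s + 1) : ℕ) : ZMod (2 ^ (s + 2)))) := by
      intro hc
      apply hx
      have hgg : ((2 ^ (s + 1) : ℕ) : ZMod (2 ^ (s + 2)))
          + ((2 ^ (s + 1) : ℕ) : ZMod (2 ^ (s + 2))) = 0 := by
        rw [← Nat.cast_add, show (2 ^ (s + 1) + 2 ^ (s + 1) : ℕ) = 2 ^ (s + 2) by ring,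
          ZMod.natCast_self]
      have hx' : x = (x + ((2 ^ (s + 1) : ℕ) : ZMod (2 ^ (s + 2))))
          + ((2 ^ (s + 1) : ℕ) : ZMod (2 ^ (s + 2))) := by
        rw [add_assoc, hgg, add_zero]
      rw [hx', hshift _ hc]
      exact hc.mul ((hcast1g ▸ isUnit_one_add_half (s := s)))
    rw [MulChar.map_nonunit _ hx, MulChar.map_nonunit _ hxg, neg_zero]

open DirichletCharacter in
lemma case_two_sum {F s : ℕ} (hF : F = 2 ^ (s + 2)) (χ₁ : DirichletCharacter ℂ F)
    (hprim : χ₁.conductor = F) :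
    ∑ a ∈ Finset.range F, χ₁ ((a : ℕ) : ZMod F) *
        (Real.log (‖1 + zetaC F ^ a‖) : ℂ)
      = - ∑ a ∈ Finset.range F, χ₁ ((a : ℕ) : ZMod F) *
        (Real.log (‖1 - zetaC F ^ a‖) : ℂ) := by
  subst hF
  have hf0 : (0 : ℕ) < 2 ^ (s + 2) := Nat.pow_pos (n := _) (by omega)
  have hg0 : (0 : ℕ) < 2 ^ (s + 1) := Nat.pow_pos (n := _) (by omega)
  have hfg : (2 : ℕ) ^ (s + 2) = 2 * 2 ^ (s + 1) := by rw [pow_succ']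
  have hζg : IsPrimitiveRoot (zetaC (2 ^ (s + 1))) (2 ^ (s + 1)) :=
    isPrimitiveRoot_zetaC hg0.ne'
  have hz2 : zetaC (2 ^ (s + 2)) ^ 2 = zetaC (2 ^ (s + 1)) := by
    rw [hfg]; exact zetaC_pow_eq (by omega) hg0.ne'
  rw [eq_neg_iff_add_eq_zero, ← Finset.sum_add_distrib]
  have step1 : ∑ a ∈ Finset.range (2 ^ (s + 2)),
      (χ₁ ((a : ℕ) : ZMod (2 ^ (s + 2))) *
        (Real.log (‖1 + zetaC (2 ^ (s + 2)) ^ a‖) : ℂ) +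
       χ₁ ((a : ℕ) : ZMod (2 ^ (s + 2))) *
        (Real.log (‖1 - zetaC (2 ^ (s + 2)) ^ a‖) : ℂ))
      = ∑ a ∈ Finset.range (2 ^ (s + 2)), χ₁ ((a : ℕ) : ZMod (2 ^ (s + 2))) *
        (Real.log (‖1 - zetaC (2 ^ (s + 1)) ^ a‖) : ℂ) := by
    refine Finset.sum_congr rfl fun a _ => ?_
    by_cases hu : IsUnit ((a : ℕ) : ZMod (2 ^ (s + 2)))
    · have hodd : Odd a := (isUnit_natCast_two_pow (by omega)).mp hu
      have hnd2 : ¬ (2 : ℕ) ^ (s + 2) ∣ 2 * a := by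
        intro hc
        obtain ⟨c, hc'⟩ := hc
        rw [hfg, mul_assoc] at hc'
        have ha' : a = 2 ^ (s + 1) * c := by omega
        have h2g : (2 : ℕ) ∣ 2 ^ (s + 1) := dvd_pow_self 2 (by omega)
        have h2a : (2 : ℕ) ∣ a := ha' ▸ h2g.mul_right c
        rcases hodd with ⟨e, he⟩
        omega
      have hnd1 : ¬ (2 : ℕ) ^ (s + 2) ∣ a := fun hc => hnd2 (Dvd.dvd.mul_left hc 2)
      have hne1 : 1 + zetaC (2 ^ (s + 2)) ^ a ≠ 0 := one_add_zeta_ne hf0.ne' hnd2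
      have hne2 : 1 - zetaC (2 ^ (s + 2)) ^ a ≠ 0 := one_sub_zeta_ne hf0.ne' hnd1
      have hcomb : (1 + zetaC (2 ^ (s + 2)) ^ a) * (1 - zetaC (2 ^ (s + 2)) ^ a)
          = 1 - zetaC (2 ^ (s + 1)) ^ a := by
        have hsq : zetaC (2 ^ (s + 2)) ^ a * zetaC (2 ^ (s + 2)) ^ a
            = zetaC (2 ^ (s + 1)) ^ a := by
          rw [← pow_add, show a + a = 2 * a by ring, pow_mul, hz2]
        linear_combination -hsq
      rw [← mul_add]
      congr 1
      rw [show ((Real.log (‖1 + zetaC (2 ^ (s + 2)) ^ a‖) : ℂ) +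
          (Real.log (‖1 - zetaC (2 ^ (s + 2)) ^ a‖) : ℂ))
          = ((Real.log (‖1 + zetaC (2 ^ (s + 2)) ^ a‖) +
             Real.log (‖1 - zetaC (2 ^ (s + 2)) ^ a‖) : ℝ) : ℂ) by push_cast; ring]
      congr 1
      rw [← Real.log_mul (norm_ne_zero_iff.mpr hne1) (norm_ne_zero_iff.mpr hne2),
        ← norm_mul, hcomb]
    · rw [MulChar.map_nonunit _ hu]; ring
  rw [step1]
  have hrange : Finset.range ((2 : ℕ) ^ (s + 2)) = Finset.range (2 ^ (s + 1) * 2) := by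
    rw [pow_succ]
  rw [hrange, sum_regroup (2 ^ (s + 1)) 2 hg0
    (fun k => χ₁ ((k : ℕ) : ZMod (2 ^ (s + 2))) *
      (Real.log (‖1 - zetaC (2 ^ (s + 1)) ^ k‖) : ℂ))]
  apply Finset.sum_eq_zero
  intro a _
  rw [Finset.sum_range_succ, Finset.sum_range_one]
  have hzg : zetaC (2 ^ (s + 1)) ^ (a + 2 ^ (s + 1) * 1) = zetaC (2 ^ (s + 1)) ^ a := by
    rw [mul_one, pow_add, hζg.pow_eq_one, mul_one]
  have hchi : χ₁ (((a + 2 ^ (s + 1) * 1 : ℕ)) : ZMod (2 ^ (s + 2)))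
      = - χ₁ ((a : ℕ) : ZMod (2 ^ (s + 2))) := by
    rw [mul_one, Nat.cast_add]
    exact chi_add_half χ₁ hprim _
  rw [hzg, hchi]
  simp only [Nat.mul_zero, Nat.add_zero]
  ring

/-- Let `m = p^n` be a prime power with `m` odd or `m ≡ 0 (mod 4)`, and
let `χ` be a nontrivial even Dirichlet character mod `m`, whose attached primitive character
has conductor `f_χ = p^s`.  Then
`∑_{k∈G_χ} χ(k)·log|1+ζ_{f_χ}^k| = ε·∑_{k∈G} χ(k)·log|1+ζ_m^k|` where `ε = -1` if `p = 2`
and `s < n`, and `ε = 1` otherwise; each sum over representatives of `G_χ` (resp. `G`) is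
written as half the full sum over residues mod `f_χ` (resp. mod `m`). -/
theorem sum_conductor_eq_sum_level (p n s m : ℕ) (hp : p.Prime) (hn : 0 < n) (hm : m = p ^ n)
    (hm4 : Odd m ∨ m % 4 = 0) (χ : DirichletCharacter ℂ m) (hχ : χ ≠ 1) (heven : χ (-1) = 1)
    (hf : χ.conductor = p ^ s) :
    (1 / 2 : ℂ) * ∑ k ∈ Finset.range χ.conductor,
        χ.primitiveCharacter ((k : ℕ) : ZMod χ.conductor) *
          (Real.log (‖1 + zetaC χ.conductor ^ k‖) : ℂ) =
      (if p = 2 ∧ s < n then (-1 : ℂ) else 1) *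
        ((1 / 2 : ℂ) * ∑ k ∈ Finset.range m,
          χ ((k : ℕ) : ZMod m) * (Real.log (‖1 + zetaC m ^ k‖) : ℂ)) := by
  have hp1 : 1 < p := hp.one_lt
  subst hm
  have hm0 : p ^ n ≠ 0 := (Nat.pow_pos (n := n) (by omega)).ne'
  have hs : 1 ≤ s := by
    by_contra hcon
    have hs0 : s = 0 := by omega
    rw [hs0, pow_zero] at hf
    exact hχ (by haveI : NeZero (p ^ n) := ⟨hm0⟩; exact DirichletCharacter.eq_one_iff_conductor_eq_one.mpr hf)
  have hsn : s ≤ n := by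
    have := hf ▸ DirichletCharacter.conductor_dvd_level χ
    exact (Nat.pow_dvd_pow_iff_le_right hp1).mp this
  have hn2 : p = 2 → 2 ≤ n := by
    intro h2
    subst h2
    rcases hm4 with hodd | hmod
    · exfalso
      have : Even ((2 : ℕ) ^ n) := (Nat.even_pow).mpr ⟨even_two, by omega⟩
      exact (Nat.not_even_iff_odd.mpr hodd) this
    · have h4 : (2 : ℕ) ^ 2 ∣ 2 ^ n := by
        have := Nat.dvd_of_mod_eq_zero hmod
        norm_num at this ⊢
        exact this
      exact (Nat.pow_dvd_pow_iff_le_right (by omega)).mp h4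
  have hdvd : χ.conductor ∣ p ^ n := DirichletCharacter.conductor_dvd_level χ
  have hchange : χ = DirichletCharacter.changeLevel hdvd χ.primitiveCharacter :=
    (DirichletCharacter.factorsThrough_conductor χ).eq_changeLevel
  have hprim : χ.primitiveCharacter.conductor = χ.conductor :=
    χ.primitiveCharacter_isPrimitive
  have hsum : (∑ k ∈ Finset.range (p ^ n),
        χ ((k : ℕ) : ZMod (p ^ n)) * (Real.log (‖1 + zetaC (p ^ n) ^ k‖) : ℂ))
      = ∑ a ∈ Finset.range χ.conductor,
        χ.primitiveCharacter ((a : ℕ) : ZMod χ.conductor) *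
        (Real.log (‖1 - (-1) ^ (p ^ (n - s)) * zetaC χ.conductor ^ a‖) : ℂ) := by
    conv_lhs => rw [hchange]
    exact level_sum_eq hp rfl hf hs hsn hn2 hdvd _
  rw [hsum]
  by_cases hcase : p = 2 ∧ s < n
  · rw [if_pos hcase]
    have hdeven : Even ((-1 : ℂ) ^ (p ^ (n - s))) → True := fun _ => trivial
    have heven' : Even (p ^ (n - s)) := by
      rw [Nat.even_pow]
      exact ⟨hcase.1 ▸ even_two, by omega⟩
    have hneg1 : ((-1 : ℂ)) ^ (p ^ (n - s)) = 1 := heven'.neg_one_pow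
    simp_rw [hneg1, one_mul]
    have hs2 : 2 ≤ s := by
      rcases Nat.lt_or_ge s 2 with hlt | hge
      · exfalso
        have hs1 : s = 1 := by omega
        have hf2 : χ.conductor = 2 := by rw [hf, hs1, hcase.1, pow_one]
        exact conductor_ne_two hm0 χ hf2
      · exact hge
    obtain ⟨s', hs'⟩ : ∃ s', s = s' + 2 := ⟨s - 2, by omega⟩
    have hF : χ.conductor = 2 ^ (s' + 2) := by rw [hf, hcase.1, hs']
    have hkey := case_two_sum hF χ.primitiveCharacter hprim
    rw [hkey]
    ring
  · rw [if_neg hcase]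
    have hodd : Odd (p ^ (n - s)) := by
      rcases hp.eq_two_or_odd' with h2 | hpodd
      · have : s = n := by
          rcases Nat.lt_or_ge s n with h | h
          · exact absurd ⟨h2, h⟩ hcase
          · omega
        rw [this, Nat.sub_self, pow_zero]
        exact odd_one
      · exact hpodd.pow
    have hneg1 : ((-1 : ℂ)) ^ (p ^ (n - s)) = -1 := hodd.neg_one_pow
    simp_rw [hneg1, neg_one_mul, sub_neg_eq_add, one_mul]

end
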